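/- Assume h₁, h₂ are continuously differentiable and the quotient h̃₁ := h₁/h₂ has nonpositive derivative on [0,∞). Let (y₁,y₂) : [0,T) → (0,∞)² be a differentiable solution of the ODE system with y₁(0), y₂(0) > 0. If a₁ > 0 and a₂ ≠ 0, then there exists a constant c > 0 such that y₁(t) ≥ c·(h₁(t)/h₂(t))^{1/a₁}·y₂(t)^{a₂/a₁} for all t ∈ [0,T). -/

import Mathlib

open Set

/-- Lemma 5.1(a) of the paper. If `h₁,h₂` are continuously
differentiable with `(h₁/h₂)' ≤ 0` on `[0,∞)`, `(y₁,y₂)` is a positive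
differentiable solution of the ODE system on `[0,T)`, `a₁ = p₂₁-p₁₁+1 > 0` and
`a₂ = p₁₂-p₂₂+1 ≠ 0`, then there is `c > 0` with
`y₁(t) ≥ c (h₁(t)/h₂(t))^{1/a₁} y₂(t)^{a₂/a₁}` on `[0,T)`. -/
theorem statement8 (p11 p12 p21 p22 : ℝ)
    (hp11 : 0 ≤ p11) (hp12 : 0 ≤ p12) (hp21 : 0 ≤ p21) (hp22 : 0 ≤ p22)
    (h1 h2 : ℝ → ℝ)
    (hh1c : ContDiffOn ℝ 1 h1 (Set.Ici 0)) (hh2c : ContDiffOn ℝ 1 h2 (Set.Ici 0))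
    (hh1p : ∀ t : ℝ, 0 ≤ t → 0 < h1 t) (hh2p : ∀ t : ℝ, 0 ≤ t → 0 < h2 t)
    (hdec : ∀ t : ℝ, 0 ≤ t →
      derivWithin (fun s => h1 s / h2 s) (Set.Ici 0) t ≤ 0)
    (T : ℝ) (hT : 0 < T)
    (y1 y2 : ℝ → ℝ)
    (hy1pos : ∀ t ∈ Set.Ico (0:ℝ) T, 0 < y1 t)
    (hy2pos : ∀ t ∈ Set.Ico (0:ℝ) T, 0 < y2 t)
    (hy1d : ∀ t ∈ Set.Ico (0:ℝ) T,
      HasDerivWithinAt y1 (h1 t * y1 t ^ p11 * y2 t ^ p12) (Set.Ico 0 T) t)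
    (hy2d : ∀ t ∈ Set.Ico (0:ℝ) T,
      HasDerivWithinAt y2 (h2 t * y2 t ^ p22 * y1 t ^ p21) (Set.Ico 0 T) t)
    (ha1 : 0 < p21 - p11 + 1) (ha2 : p12 - p22 + 1 ≠ 0) :
    ∃ c : ℝ, 0 < c ∧ ∀ t ∈ Set.Ico (0:ℝ) T,
      c * (h1 t / h2 t) ^ (1 / (p21 - p11 + 1)) *
          y2 t ^ ((p12 - p22 + 1) / (p21 - p11 + 1)) ≤ y1 t := by
  have h0T : (0:ℝ) ∈ Set.Ico (0:ℝ) T := ⟨le_refl 0, hT⟩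
  set a1 := p21 - p11 + 1 with ha1def
  set a2 := p12 - p22 + 1 with ha2def
  set H : ℝ → ℝ := fun s => h1 s / h2 s with hHdef
  have hHpos : ∀ t : ℝ, 0 ≤ t → 0 < H t := fun t ht => div_pos (hh1p t ht) (hh2p t ht)
  have hIcosub : Set.Ico (0:ℝ) T ⊆ Set.Ici 0 := fun x hx => hx.1
  -- derivative of H within the interval
  have hHd : ∀ t ∈ Set.Ico (0:ℝ) T,
      HasDerivWithinAt H (derivWithin H (Set.Ici 0) t) (Set.Ico 0 T) t := by
    intro t ht
    have h1d : DifferentiableWithinAt ℝ h1 (Set.Ici 0) t :=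
      (hh1c.differentiableOn one_ne_zero) t (hIcosub ht)
    have h2d : DifferentiableWithinAt ℝ h2 (Set.Ici 0) t :=
      (hh2c.differentiableOn one_ne_zero) t (hIcosub ht)
    have hd : DifferentiableWithinAt ℝ H (Set.Ici 0) t := h1d.div h2d (hh2p t ht.1).ne'
    exact hd.hasDerivWithinAt.mono hIcosub
  set R0 := y1 0 ^ a1 / (H 0 * y2 0 ^ a2) with hR0def
  have hden0 : 0 < H 0 * y2 0 ^ a2 :=
    mul_pos (hHpos 0 le_rfl) (Real.rpow_pos_of_pos (hy2pos 0 h0T) _)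
  have hR0pos : 0 < R0 := div_pos (Real.rpow_pos_of_pos (hy1pos 0 h0T) _) hden0
  have ha2abs : 0 < |a2| := abs_pos.mpr ha2
  set K := min R0 (a1 / |a2|) with hKdef
  have hKpos : 0 < K := lt_min hR0pos (div_pos ha1 ha2abs)
  have hKa2 : K * a2 ≤ a1 := by
    calc K * a2 ≤ K * |a2| := mul_le_mul_of_nonneg_left (le_abs_self a2) hKpos.le
      _ ≤ (a1 / |a2|) * |a2| :=
        mul_le_mul_of_nonneg_right (min_le_right _ _) (abs_nonneg _)
      _ = a1 := div_mul_cancel₀ _ ha2abs.ne'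
  set G : ℝ → ℝ := fun s => y1 s ^ a1 - K * (H s * y2 s ^ a2) with hGdef
  have hGd : ∀ t ∈ Set.Ico (0:ℝ) T, HasDerivWithinAt G
      (a1 * (h1 t * y1 t ^ p21 * y2 t ^ p12)
        - K * (derivWithin H (Set.Ici 0) t * y2 t ^ a2
            + a2 * (h1 t * y1 t ^ p21 * y2 t ^ p12))) (Set.Ico 0 T) t := by
    intro t ht
    have hy1t := hy1pos t ht
    have hy2t := hy2pos t ht
    have d1 : HasDerivWithinAt (fun s => y1 s ^ a1)
        ((h1 t * y1 t ^ p11 * y2 t ^ p12) * a1 * y1 t ^ (a1 - 1)) (Set.Ico 0 T) t :=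
      (hy1d t ht).rpow_const (Or.inl hy1t.ne')
    have d2 : HasDerivWithinAt (fun s => y2 s ^ a2)
        ((h2 t * y2 t ^ p22 * y1 t ^ p21) * a2 * y2 t ^ (a2 - 1)) (Set.Ico 0 T) t :=
      (hy2d t ht).rpow_const (Or.inl hy2t.ne')
    have d3 := ((hHd t ht).mul d2).const_mul K
    have d4 := d1.sub d3
    refine d4.congr_deriv ?_
    have e1 : y1 t ^ p11 * y1 t ^ (a1 - 1) = y1 t ^ p21 := by
      rw [← Real.rpow_add hy1t]
      congr 1
      rw [ha1def]; ring
    have e2 : y2 t ^ p22 * y2 t ^ (a2 - 1) = y2 t ^ p12 := by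
      rw [← Real.rpow_add hy2t]
      congr 1
      rw [ha2def]; ring
    have e3 : H t * h2 t = h1 t := div_mul_cancel₀ _ (hh2p t ht.1).ne'
    rw [← e1, ← e2, ← e3]
    ring
  have hGmono : MonotoneOn G (Set.Ico 0 T) := by
    apply monotoneOn_of_deriv_nonneg (convex_Ico 0 T)
    · exact fun t ht => (hGd t ht).continuousWithinAt
    · intro t ht
      rw [interior_Ico] at ht
      exact (((hGd t ⟨ht.1.le, ht.2⟩).hasDerivAt
        (Ico_mem_nhds ht.1 ht.2)).differentiableAt).differentiableWithinAt
    · intro t ht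
      rw [interior_Ico] at ht
      have ht' : t ∈ Set.Ico (0:ℝ) T := ⟨ht.1.le, ht.2⟩
      rw [((hGd t ht').hasDerivAt (Ico_mem_nhds ht.1 ht.2)).deriv]
      have hE : 0 < h1 t * y1 t ^ p21 * y2 t ^ p12 :=
        mul_pos (mul_pos (hh1p t ht'.1) (Real.rpow_pos_of_pos (hy1pos t ht') _))
          (Real.rpow_pos_of_pos (hy2pos t ht') _)
      have hP : 0 < y2 t ^ a2 := Real.rpow_pos_of_pos (hy2pos t ht') _
      have hDle := hdec t ht'.1
      nlinarith [mul_nonneg (sub_nonneg.mpr hKa2) hE.le,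
        mul_nonneg (mul_nonneg hKpos.le (neg_nonneg.mpr hDle)) hP.le]
  have key : ∀ t ∈ Set.Ico (0:ℝ) T, K * (H t * y2 t ^ a2) ≤ y1 t ^ a1 := by
    intro t ht
    have h01 := hGmono h0T ht ht.1
    have hG0 : 0 ≤ G 0 := by
      have hKR : K ≤ R0 := min_le_left _ _
      have : K * (H 0 * y2 0 ^ a2) ≤ y1 0 ^ a1 := by
        calc K * (H 0 * y2 0 ^ a2) ≤ R0 * (H 0 * y2 0 ^ a2) :=
              mul_le_mul_of_nonneg_right hKR hden0.le
          _ = y1 0 ^ a1 := div_mul_cancel₀ _ hden0.ne'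
      simpa [hGdef, sub_nonneg] using this
    have hGt : 0 ≤ G t := le_trans hG0 h01
    simpa [hGdef, sub_nonneg] using hGt
  refine ⟨K ^ (1 / a1), Real.rpow_pos_of_pos hKpos _, fun t ht => ?_⟩
  have hy1t := hy1pos t ht
  have hy2t := hy2pos t ht
  have hHt := hHpos t ht.1
  have hP : (0:ℝ) ≤ y2 t ^ a2 := (Real.rpow_pos_of_pos hy2t _).le
  show K ^ (1 / a1) * (H t) ^ (1 / a1) * y2 t ^ (a2 / a1) ≤ y1 t
  have hlhs : K ^ (1 / a1) * (H t) ^ (1 / a1) * y2 t ^ (a2 / a1)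
      = (K * (H t * y2 t ^ a2)) ^ (1 / a1) := by
    rw [Real.mul_rpow hKpos.le (mul_nonneg hHt.le hP),
      Real.mul_rpow hHt.le hP, ← Real.rpow_mul hy2t.le, mul_one_div, mul_assoc]
  rw [hlhs]
  calc (K * (H t * y2 t ^ a2)) ^ (1 / a1)
      ≤ (y1 t ^ a1) ^ (1 / a1) :=
        Real.rpow_le_rpow (mul_nonneg hKpos.le (mul_nonneg hHt.le hP)) (key t ht)
          (by positivity)
    _ = y1 t := by
        rw [← Real.rpow_mul hy1t.le, mul_one_div, div_self ha1.ne', Real.rpow_one]
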